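/- Let A^{-1}V_m = V_m H_m + v_{m+1} h_{m+1,m} e_m^T be an Arnoldi relation for A^{-1} with V_m having orthonormal columns, H_m invertible, and v_{m+1} orthogonal to the columns of V_m with unit norm. Let η = ‖(I − V_m V_m^T) A v_{m+1}‖ and assume η ≠ 0, and set v̂ = (I − V_m V_m^T) A v_{m+1}/η. Then A V_m = [V_m, v̂] G_m where G_m = [[I_m, V_m^T A v_{m+1}],[0, η]] · [[H_m^{-1}],[−h_{m+1,m} e_m^T H_m^{-1}]], and [V_m, v̂] has orthonormal columns. -/

import Mathlib

/-- The row vector `e_mᵀ ∈ ℝ^{1 × m}` (the transpose of the last canonical basis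
vector). -/
def lastBasisRow (m : ℕ) : Matrix (Fin 1) (Fin m) ℝ :=
  Matrix.of fun _ j => if (j : ℕ) = m - 1 then (1 : ℝ) else 0

/-- Arnoldi-type relation for `A` derived from the Arnoldi relation for `A⁻¹`
on the Krylov space `K_m(A⁻¹, v)`:
`A V_m = [V_m, v̂] G_m`, with `[V_m, v̂]` having orthonormal columns. -/
theorem arnoldi_relation_for_A {n m : ℕ} (hm : 0 < m)
    (A : Matrix (Fin n) (Fin n) ℝ) (hA : A.PosDef) (hAdet : IsUnit A.det)
    (V : Matrix (Fin n) (Fin m) ℝ) (H : Matrix (Fin m) (Fin m) ℝ)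
    (v : Matrix (Fin n) (Fin 1) ℝ) (h : ℝ)
    (hHdet : IsUnit H.det)
    (hVorth : V.transpose * V = 1)
    (hvnorm : v.transpose * v = 1)
    (hVv : V.transpose * v = 0)
    (hArnoldi : A⁻¹ * V = V * H + h • (v * lastBasisRow m))
    (η : ℝ)
    (hη : η = Real.sqrt (∑ i, ((A * v - V * (V.transpose * (A * v))) i 0) ^ 2))
    (hη0 : η ≠ 0)
    (vhat : Matrix (Fin n) (Fin 1) ℝ)
    (hvhat : vhat = η⁻¹ • (A * v - V * (V.transpose * (A * v)))) :
    A * V = Matrix.fromCols V vhat *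
        (Matrix.fromBlocks (1 : Matrix (Fin m) (Fin m) ℝ) (V.transpose * (A * v))
            (0 : Matrix (Fin 1) (Fin m) ℝ) (η • (1 : Matrix (Fin 1) (Fin 1) ℝ)) *
          Matrix.fromRows H⁻¹ (-(h • (lastBasisRow m * H⁻¹)))) ∧
      (Matrix.fromCols V vhat).transpose * Matrix.fromCols V vhat = 1 := by
  set w : Matrix (Fin n) (Fin 1) ℝ := A * v - V * (V.transpose * (A * v)) with hw
  have hηw : η • vhat = w := by
    rw [hvhat, smul_smul, mul_inv_cancel₀ hη0, one_smul]
  -- V = A V H + h • (A v eᵀ)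
  have h1 : V = A * V * H + h • (A * v * lastBasisRow m) := by
    calc V = A * (A⁻¹ * V) := by
            rw [← Matrix.mul_assoc, Matrix.mul_nonsing_inv A hAdet, Matrix.one_mul]
      _ = A * V * H + h • (A * v * lastBasisRow m) := by
            rw [hArnoldi, Matrix.mul_add, Matrix.mul_smul, ← Matrix.mul_assoc,
              ← Matrix.mul_assoc]
  have hHinv : H * H⁻¹ = 1 := Matrix.mul_nonsing_inv H hHdet
  have hAV : A * V = V * H⁻¹ - h • (A * v * (lastBasisRow m * H⁻¹)) := by
    have := congrArg (· * H⁻¹) h1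
    simp only [Matrix.add_mul, Matrix.smul_mul, Matrix.mul_assoc, hHinv,
      Matrix.mul_one] at this
    rw [this, Matrix.mul_assoc A v]
    abel
  constructor
  · rw [Matrix.fromBlocks_mul_fromRows, Matrix.fromCols_mul_fromRows,
      Matrix.one_mul, Matrix.zero_mul, zero_add, Matrix.smul_mul, Matrix.one_mul,
      Matrix.mul_add, Matrix.mul_smul vhat, ← Matrix.smul_mul η vhat, hηw]
    simp only [hw, hAV, Matrix.sub_mul, Matrix.mul_neg, Matrix.mul_sub,
      Matrix.mul_smul, Matrix.smul_mul, Matrix.mul_assoc, smul_sub, smul_neg]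
    abel
  · rw [Matrix.transpose_fromCols, Matrix.fromRows_mul_fromCols]
    have hVw : V.transpose * w = 0 := by
      rw [hw, Matrix.mul_sub, ← Matrix.mul_assoc V.transpose V, hVorth, Matrix.one_mul,
        sub_self]
    have hVvhat : V.transpose * vhat = 0 := by
      rw [hvhat, Matrix.mul_smul, hVw, smul_zero]
    have hww : w.transpose * w = (η ^ 2) • (1 : Matrix (Fin 1) (Fin 1) ℝ) := by
      have hsum : η ^ 2 = ∑ i, (w i 0) ^ 2 := by
        rw [hη, Real.sq_sqrt (Finset.sum_nonneg fun i _ => sq_nonneg _)]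
      ext i j
      fin_cases i; fin_cases j
      simp [Matrix.mul_apply, hsum, sq, Matrix.transpose_apply]
    have hvv : vhat.transpose * vhat = 1 := by
      rw [hvhat, Matrix.transpose_smul, Matrix.smul_mul, Matrix.mul_smul, hww,
        smul_smul, smul_smul]
      rw [show η⁻¹ * η⁻¹ * η ^ 2 = 1 by field_simp, one_smul]
    rw [hVvhat, hvv]
    have hvhatV : vhat.transpose * V = 0 := by
      have := congrArg Matrix.transpose hVvhat
      rwa [Matrix.transpose_mul, Matrix.transpose_transpose, Matrix.transpose_zero] at this
    rw [hvhatV, hVorth, ← Matrix.fromBlocks_one]
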